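/- For every positive integer p and every natural number n, the number of noncrossing partitions of {1,…,pn} in which the cardinality of every block is a multiple of p equals the Fuss–Catalan number A_n^{p+1} = (1/((p+1)n+1))·C((p+1)n+1, n). -/

import Mathlib

/-- A finpartition of a finite set of naturals is noncrossing (planar) if there are no
elements `a < b < c < d` with `a, c` in one block and `b, d` in a different block. -/
def IsNoncrossing {s : Finset ℕ} (P : Finpartition s) : Prop :=
  ∀ a b c d : ℕ, a < b → b < c → c < d →
    ∀ B₁ ∈ P.parts, ∀ B₂ ∈ P.parts,
      a ∈ B₁ → c ∈ B₁ → b ∈ B₂ → d ∈ B₂ → B₁ = B₂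

namespace FCaux
open Fin.NatCast Fin.CommRing
section A1
variable (p n : ℕ)

/-- step value at extended position `i` (indices mod `p*n+1`). -/
def term (c : Fin (p*n+1) → ℕ) (i : ℕ) : ℤ := p * c (i : Fin (p*n+1)) - 1

/-- prefix sums of the periodically extended step sequence. -/
def FF (c : Fin (p*n+1) → ℕ) (j : ℕ) : ℤ := ∑ i ∈ Finset.range j, term p n c i

/-- rotation of the sequence by `s`. -/
def rot (s : ℕ) (c : Fin (p*n+1) → ℕ) : Fin (p*n+1) → ℕ := fun i => c (i + (s : Fin (p*n+1)))

/-- admissibility (goodness) of a sequence. -/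
def Good (c : Fin (p*n+1) → ℕ) : Prop := ∀ j, 0 < j → j ≤ p*n → 0 ≤ FF p n c j

variable {p n}

lemma sum_range_c (c : Fin (p*n+1) → ℕ) (hc : ∑ i, c i = n) :
    ∑ i ∈ Finset.range (p*n+1), (c (i : Fin (p*n+1)) : ℤ) = n := by
  rw [← Fin.sum_univ_eq_sum_range (fun i => (c (i : Fin (p*n+1)) : ℤ)) (p*n+1)]
  rw [← Nat.cast_sum]
  norm_cast

lemma FF_period (c : Fin (p*n+1) → ℕ) (hc : ∑ i, c i = n) :
    FF p n c (p*n+1) = -1 := by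
  unfold FF term
  rw [Finset.sum_sub_distrib, ← Finset.mul_sum, sum_range_c c hc]
  simp only [Finset.sum_const, Finset.card_range, nsmul_eq_mul, mul_one]
  push_cast
  ring

lemma term_period (c : Fin (p*n+1) → ℕ) (i : ℕ) : term p n c (i + (p*n+1)) = term p n c i := by
  unfold term
  congr 2
  have : ((i + (p*n+1) : ℕ) : Fin (p*n+1)) = ((i:ℕ) : Fin (p*n+1)) + ((p*n+1 : ℕ) : Fin (p*n+1)) := by
    push_cast; ring
  rw [this]
  simp

lemma FF_add (c : Fin (p*n+1) → ℕ) (a b : ℕ) :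
    FF p n c (a + b) = FF p n c a + ∑ i ∈ Finset.range b, term p n c (a + i) := by
  unfold FF
  rw [Finset.sum_range_add]

lemma FF_rot (c : Fin (p*n+1) → ℕ) (s j : ℕ) :
    FF p n (rot p n s c) j = FF p n c (s + j) - FF p n c s := by
  rw [FF_add c s j]
  simp only [add_sub_cancel_left]
  unfold FF term rot
  apply Finset.sum_congr rfl
  intro i _
  congr 2
  push_cast
  ring

lemma rot_rot (c : Fin (p*n+1) → ℕ) (s t : ℕ) :
    rot p n s (rot p n t c) = rot p n (t + s) c := by
  funext i
  unfold rot
  congr 1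
  push_cast
  ring

lemma rot_full (c : Fin (p*n+1) → ℕ) : rot p n (p*n+1) c = c := by
  funext i
  unfold rot
  congr 1
  simp

lemma sum_rot (c : Fin (p*n+1) → ℕ) (s : ℕ) (hc : ∑ i, c i = n) :
    ∑ i, rot p n s c i = n := by
  unfold rot
  have := Fintype.sum_equiv (Equiv.addRight ((s : Fin (p*n+1)))) (fun i => c (i + (s : Fin (p*n+1)))) c (fun i => rfl)
  rw [this, hc]

end A1

/-- set of minimizers of `FF c` on `[0, p*n+1)`. -/
def argminSet (p n : ℕ) (c : Fin (p*n+1) → ℕ) : Finset ℕ :=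
  @Finset.filter _ (fun s => ∀ t ∈ Finset.range (p*n+1), FF p n c s ≤ FF p n c t)
    (fun _ => Finset.decidableDforallFinset) (Finset.range (p*n+1))

lemma mem_argminSet {p n : ℕ} {c : Fin (p*n+1) → ℕ} {s : ℕ} :
    s ∈ argminSet p n c ↔ s < p*n+1 ∧ ∀ t < p*n+1, FF p n c s ≤ FF p n c t := by
  rw [argminSet, Finset.mem_filter, Finset.mem_range]
  simp only [Finset.mem_range]

lemma argminSet_nonempty (p n : ℕ) (c : Fin (p*n+1) → ℕ) : (argminSet p n c).Nonempty := by
  obtain ⟨s, hs, hmin⟩ := Finset.exists_min_image (Finset.range (p*n+1)) (FF p n c)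
    ⟨0, Finset.mem_range.2 (Nat.succ_pos _)⟩
  refine ⟨s, mem_argminSet.2 ⟨Finset.mem_range.1 hs, fun t ht => hmin t (Finset.mem_range.2 ht)⟩⟩

/-- least minimizer. -/
noncomputable def s0 (p n : ℕ) (c : Fin (p*n+1) → ℕ) : ℕ :=
  (argminSet p n c).min' (argminSet_nonempty p n c)

lemma s0_mem (p n : ℕ) (c : Fin (p*n+1) → ℕ) : s0 p n c ∈ argminSet p n c :=
  Finset.min'_mem _ _

lemma s0_lt (p n : ℕ) (c : Fin (p*n+1) → ℕ) : s0 p n c < p*n+1 :=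
  (mem_argminSet.1 (s0_mem p n c)).1

lemma s0_min (p n : ℕ) (c : Fin (p*n+1) → ℕ) {t : ℕ} (ht : t < p*n+1) :
    FF p n c (s0 p n c) ≤ FF p n c t :=
  (mem_argminSet.1 (s0_mem p n c)).2 t ht

lemma s0_least (p n : ℕ) (c : Fin (p*n+1) → ℕ) {t : ℕ} (ht : t ∈ argminSet p n c) :
    s0 p n c ≤ t := Finset.min'_le _ _ ht

lemma FF_shift (c : Fin (p*n+1) → ℕ) (hc : ∑ i, c i = n) (t : ℕ) :
    FF p n c (t + (p*n+1)) = FF p n c t - 1 := by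
  rw [add_comm, FF_add, FF_period c hc]
  have : ∀ i ∈ Finset.range t, term p n c ((p*n+1) + i) = term p n c i := by
    intro i _
    rw [add_comm]
    exact term_period c i
  rw [Finset.sum_congr rfl this]
  unfold FF
  ring

lemma FF_strict (c : Fin (p*n+1) → ℕ) {t : ℕ} (ht : t < p*n+1)
    (hlt : t < s0 p n c) : FF p n c (s0 p n c) + 1 ≤ FF p n c t := by
  by_contra h
  push_neg at h
  have hle : FF p n c t ≤ FF p n c (s0 p n c) := by omega
  have : t ∈ argminSet p n c := by
    refine mem_argminSet.2 ⟨ht, fun u hu => ?_⟩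
    exact le_trans hle (s0_min p n c hu)
  exact absurd (s0_least p n c this) (by omega)

lemma good_rot_s0 (c : Fin (p*n+1) → ℕ) (hc : ∑ i, c i = n) :
    Good p n (rot p n (s0 p n c) c) := by
  intro j hj hjN
  rw [FF_rot]
  rcases lt_or_ge (s0 p n c + j) (p*n+1) with h | h
  · have := s0_min p n c h
    omega
  · have hslt : s0 p n c < p*n+1 := s0_lt p n c
    have h1 : s0 p n c + j = (s0 p n c + j - (p*n+1)) + (p*n+1) := by omega
    have h2 := FF_shift c hc (s0 p n c + j - (p*n+1))
    rw [← h1] at h2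
    have h3 : s0 p n c + j - (p*n+1) < s0 p n c := by omega
    have := FF_strict c (t := s0 p n c + j - (p*n+1)) (by omega) h3
    omega

lemma good_unique (c : Fin (p*n+1) → ℕ) (hc : ∑ i, c i = n) {s s' : ℕ}
    (hs : s < p*n+1) (hs' : s' < p*n+1)
    (hg : Good p n (rot p n s c)) (hg' : Good p n (rot p n s' c)) : s = s' := by
  by_contra hne
  -- wlog s < s'
  have key : ∀ u v : ℕ, u < v → v < p*n+1 →
      Good p n (rot p n u c) → Good p n (rot p n v c) → False := by
    intro u v huv hv hgu hgv
    have h1 : 0 ≤ FF p n c v - FF p n c u := by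
      have := hgu (v - u) (by omega) (by omega)
      rw [FF_rot] at this
      have : FF p n (rot p n u c) (v-u) = FF p n c v - FF p n c u := by
        rw [FF_rot]
        congr 2
        omega
      have h2 := hgu (v - u) (by omega) (by omega)
      rw [this] at h2
      exact h2
    have h2 : 0 ≤ FF p n c u - 1 - FF p n c v := by
      have h3 := hgv (u + (p*n+1) - v) (by omega) (by omega)
      rw [FF_rot] at h3
      have h4 : v + (u + (p*n+1) - v) = u + (p*n+1) := by omega
      rw [h4, FF_shift c hc u] at h3
      omega
    omega
  rcases lt_or_gt_of_ne hne with h | h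
  · exact key s s' h hs' hg hg'
  · exact key s' s h hs hg' hg

/-- the finset of good (admissible) sequences. -/
noncomputable def GoodF (p n : ℕ) : Finset (Fin (p*n+1) → ℕ) :=
  @Finset.filter _ (Good p n) (fun _ => Classical.propDecidable _)
    (Finset.piAntidiag Finset.univ n)

lemma mem_GoodF {p n : ℕ} {c : Fin (p*n+1) → ℕ} :
    c ∈ GoodF p n ↔ (∑ i, c i = n) ∧ Good p n c := by
  rw [GoodF]
  rw [@Finset.mem_filter _ _ (fun _ => Classical.propDecidable _), Finset.mem_piAntidiag]
  constructor
  · rintro ⟨⟨h1, _⟩, h2⟩; exact ⟨h1, h2⟩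
  · rintro ⟨h1, h2⟩; exact ⟨⟨h1, fun i _ => Finset.mem_univ i⟩, h2⟩

lemma card_piAntidiag_eq (p n : ℕ) :
    (Finset.piAntidiag (Finset.univ : Finset (Fin (p*n+1))) n).card = (p*n + n).choose n := by
  rw [← Finset.map_sym_eq_piAntidiag, Finset.card_map, Finset.sym_univ]
  have h := Sym.card_sym_eq_choose (α := Fin (p*n+1)) n
  rw [show ((Finset.univ : Finset (Sym (Fin (p*n+1)) n)).card = Fintype.card (Sym (Fin (p*n+1)) n)) from rfl,
    h, Fintype.card_fin]
  congr 1
  omega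

theorem card_eq_mul_goodF (p n : ℕ) :
    (p*n + n).choose n = (p*n+1) * (GoodF p n).card := by
  rw [← card_piAntidiag_eq p n]
  have hbij : (Finset.piAntidiag (Finset.univ : Finset (Fin (p*n+1))) n).card
      = ((Finset.range (p*n+1)) ×ˢ GoodF p n).card := by
    apply Finset.card_bij' (fun c _ => (s0 p n c, rot p n (s0 p n c) c))
      (fun sg _ => rot p n (p*n+1 - sg.1) sg.2)
    · intro c hc
      rw [Finset.mem_piAntidiag] at hc
      have hsum : ∑ i, c i = n := hc.1
      refine Finset.mem_product.2 ⟨Finset.mem_range.2 (s0_lt p n c), mem_GoodF.2 ⟨?_, ?_⟩⟩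
      · exact sum_rot c _ hsum
      · exact good_rot_s0 c hsum
    · intro sg hsg
      rw [Finset.mem_product] at hsg
      have hsum : ∑ i, sg.2 i = n := (mem_GoodF.1 hsg.2).1
      rw [Finset.mem_piAntidiag]
      exact ⟨sum_rot _ _ hsum, fun i _ => Finset.mem_univ i⟩
    · intro c hc
      rw [rot_rot, Nat.add_sub_cancel' (le_of_lt (s0_lt p n c)), rot_full]
    · intro sg hsg
      rw [Finset.mem_product] at hsg
      obtain ⟨hs, hg⟩ := hsg
      rw [Finset.mem_range] at hs
      have hsum : ∑ i, sg.2 i = n := (mem_GoodF.1 hg).1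
      have hgood : Good p n sg.2 := (mem_GoodF.1 hg).2
      have hc'sum : ∑ i, rot p n (p*n+1 - sg.1) sg.2 i = n := sum_rot _ _ hsum
      have key : rot p n sg.1 (rot p n (p*n+1 - sg.1) sg.2) = sg.2 := by
        rw [rot_rot]
        rw [show p*n+1 - sg.1 + sg.1 = p*n+1 by omega, rot_full]
      have hs0 : s0 p n (rot p n (p*n+1 - sg.1) sg.2) = sg.1 := by
        apply good_unique _ hc'sum (s0_lt p n _) hs
        · exact good_rot_s0 _ hc'sum
        · rw [key]; exact hgood
      have : (s0 p n (rot p n (p*n+1 - sg.1) sg.2), rot p n (s0 p n (rot p n (p*n+1 - sg.1) sg.2)) (rot p n (p*n+1 - sg.1) sg.2)) = (sg.1, sg.2) := by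
        rw [hs0, key]
      simpa using this
  rw [hbij, Finset.card_product, Finset.card_range]


/-- "excess" of the opening sequence `p*b` on the interval `[i,j]`. -/
def EE (p : ℕ) (b : ℕ → ℕ) (i j : ℕ) : ℤ :=
  (∑ l ∈ Finset.Icc i j, (p * b l : ℤ)) - ((j : ℤ) + 1 - (i : ℤ))

def candSet (p : ℕ) (b : ℕ → ℕ) (j : ℕ) : Finset ℕ :=
  (Finset.Icc 1 j).filter (fun i => 0 ≤ EE p b i j)

/-- the opener of position `j`. -/
def mu (p : ℕ) (b : ℕ → ℕ) (j : ℕ) : ℕ :=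
  if h : (candSet p b j).Nonempty then (candSet p b j).max' h else 0

lemma EE_self (p : ℕ) (b : ℕ → ℕ) (i : ℕ) : EE p b i i = (p * b i : ℤ) - 1 := by
  unfold EE
  rw [Finset.Icc_self, Finset.sum_singleton]
  ring

lemma EE_split (p : ℕ) (b : ℕ → ℕ) {m k j : ℕ} (h1 : m ≤ k + 1) (h2 : k ≤ j) :
    EE p b m j = EE p b m k + EE p b (k+1) j := by
  unfold EE
  have : ∑ l ∈ Finset.Icc m j, (p * b l : ℤ)
      = ∑ l ∈ Finset.Icc m k, (p * b l : ℤ) + ∑ l ∈ Finset.Icc (k+1) j, (p * b l : ℤ) := by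
    rw [← Finset.Ico_add_one_right_eq_Icc, ← Finset.Ico_add_one_right_eq_Icc, ← Finset.Ico_add_one_right_eq_Icc]
    rw [Finset.sum_Ico_consecutive _ h1 (by omega)]
  rw [this]
  push_cast
  ring

section WithSeq
variable {p n : ℕ} (b : ℕ → ℕ)

/-- admissibility hypotheses -/
def SeqOK (p n : ℕ) (b : ℕ → ℕ) : Prop :=
  (∀ i, b i ≠ 0 → 1 ≤ i ∧ i ≤ p*n) ∧ (∑ i ∈ Finset.Icc 1 (p*n), b i = n) ∧
    (∀ j, 1 ≤ j → j ≤ p*n → (j : ℕ) ≤ p * ∑ i ∈ Finset.Icc 1 j, b i)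

variable {b}

lemma cand_nonempty (hOK : SeqOK p n b) {j : ℕ} (hj1 : 1 ≤ j) (hjN : j ≤ p*n) :
    (candSet p b j).Nonempty := by
  refine ⟨1, Finset.mem_filter.2 ⟨Finset.mem_Icc.2 ⟨le_refl _, hj1⟩, ?_⟩⟩
  have h := hOK.2.2 j hj1 hjN
  unfold EE
  have : ∑ l ∈ Finset.Icc 1 j, (p * b l : ℤ) = (p : ℤ) * ∑ l ∈ Finset.Icc 1 j, (b l : ℤ) := by
    rw [Finset.mul_sum]
  rw [this]
  have hcast : ((p * ∑ i ∈ Finset.Icc 1 j, b i : ℕ) : ℤ) = (p:ℤ) * ∑ l ∈ Finset.Icc 1 j, (b l : ℤ) := by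
    push_cast
    ring
  have := (Int.ofNat_le.2 h)
  omega

lemma mu_eq_max' (hOK : SeqOK p n b) {j : ℕ} (hj1 : 1 ≤ j) (hjN : j ≤ p*n) :
    mu p b j = (candSet p b j).max' (cand_nonempty hOK hj1 hjN) := by
  unfold mu
  rw [dif_pos (cand_nonempty hOK hj1 hjN)]

lemma mu_mem (hOK : SeqOK p n b) {j : ℕ} (hj1 : 1 ≤ j) (hjN : j ≤ p*n) :
    mu p b j ∈ candSet p b j := by
  rw [mu_eq_max' hOK hj1 hjN]
  exact Finset.max'_mem _ _

lemma mu_ge_one (hOK : SeqOK p n b) {j : ℕ} (hj1 : 1 ≤ j) (hjN : j ≤ p*n) :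
    1 ≤ mu p b j := (Finset.mem_Icc.1 (Finset.mem_filter.1 (mu_mem hOK hj1 hjN)).1).1

lemma mu_le (hOK : SeqOK p n b) {j : ℕ} (hj1 : 1 ≤ j) (hjN : j ≤ p*n) :
    mu p b j ≤ j := (Finset.mem_Icc.1 (Finset.mem_filter.1 (mu_mem hOK hj1 hjN)).1).2

lemma EE_mu (hOK : SeqOK p n b) {j : ℕ} (hj1 : 1 ≤ j) (hjN : j ≤ p*n) :
    0 ≤ EE p b (mu p b j) j := (Finset.mem_filter.1 (mu_mem hOK hj1 hjN)).2

lemma EE_lt_of_gt_mu (hOK : SeqOK p n b) {j i : ℕ} (hj1 : 1 ≤ j) (hjN : j ≤ p*n)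
    (hi : mu p b j < i) (hij : i ≤ j) : EE p b i j < 0 := by
  by_contra h
  push_neg at h
  have hmem : i ∈ candSet p b j := Finset.mem_filter.2 ⟨Finset.mem_Icc.2 ⟨by omega, hij⟩, h⟩
  have := Finset.le_max' (candSet p b j) i hmem
  rw [← mu_eq_max' hOK hj1 hjN] at this
  omega

lemma b_mu_ne_zero (hOK : SeqOK p n b) {j : ℕ} (hj1 : 1 ≤ j) (hjN : j ≤ p*n) :
    b (mu p b j) ≠ 0 := by
  intro h0
  have h1 := mu_ge_one hOK hj1 hjN
  have h2 := mu_le hOK hj1 hjN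
  have h3 := EE_mu hOK hj1 hjN
  rcases eq_or_lt_of_le h2 with heq | hlt
  · rw [heq] at h3 h0
    rw [EE_self, h0] at h3
    simp at h3
  · have hsplit := EE_split p b (m := mu p b j) (k := mu p b j) (j := j) (by omega) (by omega)
    rw [EE_self, h0] at hsplit
    have h4 : EE p b (mu p b j + 1) j < 0 := EE_lt_of_gt_mu hOK hj1 hjN (by omega) (by omega)
    simp at hsplit
    omega

lemma mu_self (hp : 0 < p) (hOK : SeqOK p n b) {i : ℕ} (hi1 : 1 ≤ i) (hiN : i ≤ p*n)
    (hbi : b i ≠ 0) : mu p b i = i := by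
  have hmem : i ∈ candSet p b i := by
    refine Finset.mem_filter.2 ⟨Finset.mem_Icc.2 ⟨hi1, le_refl _⟩, ?_⟩
    rw [EE_self]
    have : 1 ≤ p * b i := Nat.one_le_iff_ne_zero.2 (by positivity)
    have : (1 : ℤ) ≤ (p * b i : ℤ) := by exact_mod_cast this
    omega
  have h1 := Finset.le_max' (candSet p b i) i hmem
  rw [← mu_eq_max' hOK hi1 hiN] at h1
  have h2 := mu_le hOK hi1 hiN
  omega

lemma mu_nesting (hOK : SeqOK p n b) {j l : ℕ} (hj1 : 1 ≤ j) (hjN : j ≤ p*n)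
    (hl1 : mu p b j ≤ l) (hl2 : l ≤ j) : mu p b j ≤ mu p b l := by
  have hl1' : 1 ≤ l := le_trans (mu_ge_one hOK hj1 hjN) hl1
  have hlN : l ≤ p*n := le_trans hl2 hjN
  by_contra hcon
  push_neg at hcon
  -- mu l < mu j ≤ l
  have hEml : EE p b (mu p b j) l < 0 := EE_lt_of_gt_mu hOK hl1' hlN hcon hl1
  have hEmj : 0 ≤ EE p b (mu p b j) j := EE_mu hOK hj1 hjN
  rcases eq_or_lt_of_le hl2 with heq | hlt
  · rw [heq] at hEml; omega
  · have hsplit := EE_split p b (m := mu p b j) (k := l) (j := j) (by omega) (by omega)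
    have : 0 ≤ EE p b (l+1) j := by omega
    have := EE_lt_of_gt_mu hOK hj1 hjN (i := l+1) (by omega) (by omega)
    omega

end WithSeq

section WithSeq2
variable {p n : ℕ} {b : ℕ → ℕ}

lemma EE_one_eq (p : ℕ) (b : ℕ → ℕ) (j : ℕ) :
    EE p b 1 j = (p : ℤ) * (∑ i ∈ Finset.Icc 1 j, (b i : ℤ)) - j := by
  unfold EE
  rw [Finset.mul_sum]
  push_cast
  ring

lemma EE_step (p : ℕ) (b : ℕ → ℕ) {m k : ℕ} (h : m ≤ k + 1) :
    EE p b m (k+1) = EE p b m k + ((p * b (k+1) : ℤ) - 1) := by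
  rw [EE_split p b (m := m) (k := k) (j := k+1) h (by omega), EE_self]

lemma EE_le_zero_at_N (hOK : SeqOK p n b) {m : ℕ} (hm1 : 1 ≤ m) (hmN : m ≤ p*n) :
    EE p b m (p*n) ≤ 0 := by
  have hEE1 : EE p b 1 (p*n) = 0 := by
    rw [EE_one_eq]
    have : (∑ i ∈ Finset.Icc 1 (p*n), (b i : ℤ)) = (n : ℤ) := by
      rw [← Nat.cast_sum, hOK.2.1]
    rw [this]
    push_cast
    ring
  rcases eq_or_lt_of_le hm1 with heq | hlt
  · rw [← heq]; omega
  · have hsplit := EE_split p b (m := 1) (k := m - 1) (j := p*n) (by omega) (by omega)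
    have hfirst : 0 ≤ EE p b 1 (m-1) := by
      rw [EE_one_eq]
      have h := hOK.2.2 (m-1) (by omega) (by omega)
      have hcast : ((p * ∑ i ∈ Finset.Icc 1 (m-1), b i : ℕ) : ℤ)
          = (p:ℤ) * ∑ l ∈ Finset.Icc 1 (m-1), (b l : ℤ) := by push_cast; ring
      have := (Int.ofNat_le.2 h)
      omega
    have : m - 1 + 1 = m := by omega
    rw [this] at hsplit
    omega

lemma mu_eq_strict (hOK : SeqOK p n b) {j m : ℕ} (hj1 : 1 ≤ j) (hjN : j ≤ p*n)
    (h : mu p b j = m) {l : ℕ} (hl : m ≤ l) (hlj : l < j) : EE p b m j < EE p b m l := by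
  have hsplit := EE_split p b (m := m) (k := l) (j := j) (by omega) (by omega)
  have hneg : EE p b (l+1) j < 0 := by
    apply EE_lt_of_gt_mu hOK hj1 hjN (by omega) (by omega)
  omega

lemma mu_eq_of_strict (hOK : SeqOK p n b) {j m : ℕ} (hj1 : 1 ≤ j) (hjN : j ≤ p*n)
    (hm1 : 1 ≤ m) (hmj : m ≤ j) (hE : 0 ≤ EE p b m j)
    (hstrict : ∀ l, m ≤ l → l < j → EE p b m j < EE p b m l) : mu p b j = m := by
  have hmem : m ∈ candSet p b j := Finset.mem_filter.2 ⟨Finset.mem_Icc.2 ⟨hm1, hmj⟩, hE⟩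
  have h1 : m ≤ mu p b j := by
    have := Finset.le_max' (candSet p b j) m hmem
    rw [← mu_eq_max' hOK hj1 hjN] at this
    exact this
  rcases eq_or_lt_of_le h1 with heq | hlt
  · omega
  · exfalso
    have hmu_le := mu_le hOK hj1 hjN
    have hE_mu := EE_mu hOK hj1 hjN
    have hsplit := EE_split p b (m := m) (k := mu p b j - 1) (j := j) (by omega) (by omega)
    rw [show mu p b j - 1 + 1 = mu p b j by omega] at hsplit
    rcases eq_or_lt_of_le hmu_le with heq2 | hlt2
    · -- mu j = j ; strict at l := j-1? easier: l := mu-1 needs < j i.e. mu ≤ j; if mu = j then l = j-1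
      have := hstrict (mu p b j - 1) (by omega) (by omega)
      omega
    · have := hstrict (mu p b j - 1) (by omega) (by omega)
      omega

/-- the fiber (block) of an opener. -/
def fib (p n : ℕ) (b : ℕ → ℕ) (m : ℕ) : Finset ℕ :=
  (Finset.Icc 1 (p*n)).filter (fun j => mu p b j = m)

lemma mem_fib {p n : ℕ} {b : ℕ → ℕ} {m j : ℕ} :
    j ∈ fib p n b m ↔ (1 ≤ j ∧ j ≤ p*n) ∧ mu p b j = m := by
  rw [fib, Finset.mem_filter, Finset.mem_Icc]

lemma card_fib (hp : 0 < p) (hOK : SeqOK p n b) {m : ℕ} (hm1 : 1 ≤ m) (hmN : m ≤ p*n)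
    (hbm : b m ≠ 0) : (fib p n b m).card = p * b m := by
  have hNne : ∀ t : ℕ, ((Finset.Icc m (p*n)).filter (fun j => EE p b m j ≤ (t:ℤ))).Nonempty := by
    intro t
    refine ⟨p*n, Finset.mem_filter.2 ⟨Finset.mem_Icc.2 ⟨hmN, le_refl _⟩, ?_⟩⟩
    have := EE_le_zero_at_N hOK hm1 hmN
    omega
  have hEmm : EE p b m m = (p * b m : ℤ) - 1 := EE_self p b m
  have hpbm : 1 ≤ p * b m := Nat.one_le_iff_ne_zero.2 (by positivity)
  have key : ∀ t : ℕ, t < p * b m →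
      EE p b m (((Finset.Icc m (p*n)).filter (fun j => EE p b m j ≤ (t:ℤ))).min' (hNne t)) = (t:ℤ)
      ∧ mu p b (((Finset.Icc m (p*n)).filter (fun j => EE p b m j ≤ (t:ℤ))).min' (hNne t)) = m := by
    intro t ht
    set S := (Finset.Icc m (p*n)).filter (fun j => EE p b m j ≤ (t:ℤ)) with hS
    set jt := S.min' (hNne t) with hjt
    have hjtS : jt ∈ S := Finset.min'_mem _ _
    obtain ⟨hjtIcc, hjtE⟩ := Finset.mem_filter.1 hjtS
    rw [Finset.mem_Icc] at hjtIcc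
    have hEeq : EE p b m jt = (t : ℤ) := by
      rcases eq_or_lt_of_le hjtIcc.1 with heq | hlt
      · rw [← heq] at hjtE ⊢
        omega
      · have hprev : ¬ (jt - 1 ∈ S) := by
          intro hmem
          have := Finset.min'_le S _ hmem
          omega
        have hprevE : (t:ℤ) < EE p b m (jt - 1) := by
          by_contra hcon
          push_neg at hcon
          exact hprev (Finset.mem_filter.2 ⟨Finset.mem_Icc.2 ⟨by omega, by omega⟩, hcon⟩)
        have hstep := EE_step p b (m := m) (k := jt - 1) (by omega)
        rw [show jt - 1 + 1 = jt by omega] at hstep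
        have : (0:ℤ) ≤ (p * b jt : ℤ) := by positivity
        omega
    refine ⟨hEeq, ?_⟩
    apply mu_eq_of_strict hOK (by omega) hjtIcc.2 hm1 hjtIcc.1
    · omega
    · intro l hl hlj
      have hnot : ¬ (l ∈ S) := by
        intro hmem
        have := Finset.min'_le S _ hmem
        omega
      have : (t:ℤ) < EE p b m l := by
        by_contra hcon
        push_neg at hcon
        exact hnot (Finset.mem_filter.2 ⟨Finset.mem_Icc.2 ⟨hl, by omega⟩, hcon⟩)
      omega
  rw [show p * b m = (Finset.range (p * b m)).card from (Finset.card_range _).symm]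
  apply Finset.card_bij' (fun j _ => (EE p b m j).toNat)
    (fun t _ => ((Finset.Icc m (p*n)).filter (fun j => EE p b m j ≤ (t:ℤ))).min' (hNne t))
  · -- maps into range
    intro j hj
    obtain ⟨⟨hj1, hjN⟩, hmu⟩ := mem_fib.1 hj
    have hE : 0 ≤ EE p b m j := hmu ▸ EE_mu hOK hj1 hjN
    have hmj : m ≤ j := hmu ▸ mu_le hOK hj1 hjN
    have hle : EE p b m j ≤ (p * b m : ℤ) - 1 := by
      rcases eq_or_lt_of_le hmj with heq | hlt
      · rw [← heq]; omega
      · have := mu_eq_strict hOK hj1 hjN hmu (l := m) (le_refl _) hlt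
        omega
    rw [Finset.mem_range]
    omega
  · -- inverse maps into fib
    intro t ht
    rw [Finset.mem_range] at ht
    obtain ⟨hEeq, hmujt⟩ := key t ht
    have hjtS := Finset.min'_mem _ (hNne t)
    obtain ⟨hjtIcc, _⟩ := Finset.mem_filter.1 hjtS
    rw [Finset.mem_Icc] at hjtIcc
    exact mem_fib.2 ⟨⟨by omega, hjtIcc.2⟩, hmujt⟩
  · -- left inverse
    intro j hj
    obtain ⟨⟨hj1, hjN⟩, hmu⟩ := mem_fib.1 hj
    have hE : 0 ≤ EE p b m j := hmu ▸ EE_mu hOK hj1 hjN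
    have hmj : m ≤ j := hmu ▸ mu_le hOK hj1 hjN
    have hcast : ((EE p b m j).toNat : ℤ) = EE p b m j := Int.toNat_of_nonneg hE
    have hjS : j ∈ (Finset.Icc m (p*n)).filter (fun j' => EE p b m j' ≤ ((EE p b m j).toNat :ℤ)) := by
      refine Finset.mem_filter.2 ⟨Finset.mem_Icc.2 ⟨hmj, hjN⟩, by omega⟩
    have hminle := Finset.min'_le _ _ hjS
    set j' := ((Finset.Icc m (p*n)).filter (fun j' => EE p b m j' ≤ ((EE p b m j).toNat : ℤ))).min'
      (hNne _) with hj'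
    have hj'S : j' ∈ _ := Finset.min'_mem _ (hNne ((EE p b m j).toNat))
    obtain ⟨hj'Icc, hj'E⟩ := Finset.mem_filter.1 hj'S
    rw [Finset.mem_Icc] at hj'Icc
    rcases eq_or_lt_of_le (hminle : j' ≤ j) with heq | hlt
    · exact heq
    · exfalso
      have := mu_eq_strict hOK hj1 hjN hmu (l := j') hj'Icc.1 hlt
      omega
  · -- right inverse
    intro t ht
    rw [Finset.mem_range] at ht
    obtain ⟨hEeq, _⟩ := key t ht
    rw [hEeq]
    exact Int.toNat_natCast t

end WithSeq2
section WithSeq3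
variable {p n : ℕ} {b : ℕ → ℕ} {l : ℕ}

/-- minimum of a finset of naturals (0 if empty). -/
def minOf (B : Finset ℕ) : ℕ := B.min.untopD 0

lemma minOf_eq_min' {B : Finset ℕ} (h : B.Nonempty) : minOf B = B.min' h := by
  rw [minOf, ← Finset.coe_min' h]
  rfl

lemma minOf_mem {B : Finset ℕ} (h : B.Nonempty) : minOf B ∈ B := by
  rw [minOf_eq_min' h]; exact Finset.min'_mem _ _

lemma minOf_le {B : Finset ℕ} {x : ℕ} (hx : x ∈ B) : minOf B ≤ x := by
  rw [minOf_eq_min' ⟨x, hx⟩]; exact Finset.min'_le _ _ hx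

lemma minOf_eq {B : Finset ℕ} {m : ℕ} (hm : m ∈ B) (hall : ∀ x ∈ B, m ≤ x) : minOf B = m :=
  le_antisymm (minOf_le hm) (hall _ (minOf_mem ⟨m, hm⟩))

/-- parts of the decoded partition. -/
def decParts (p n : ℕ) (b : ℕ → ℕ) : Finset (Finset ℕ) :=
  (Finset.Icc 1 (p*n)).image (fun j => fib p n b (mu p b j))

lemma self_mem_fib_mu {j : ℕ} (hj1 : 1 ≤ j) (hjN : j ≤ p*n) : j ∈ fib p n b (mu p b j) :=
  mem_fib.2 ⟨⟨hj1, hjN⟩, rfl⟩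

/-- the decoded partition. -/
def decP (p n : ℕ) (b : ℕ → ℕ) : Finpartition (Finset.Icc 1 (p*n)) where
  parts := decParts p n b
  supIndep := by
    rw [Finset.supIndep_iff_pairwiseDisjoint]
    intro B hB B' hB' hne
    simp only [decParts, Finset.coe_image, Set.mem_image] at hB hB'
    obtain ⟨j, hj, rfl⟩ := hB
    obtain ⟨j', hj', rfl⟩ := hB'
    rcases eq_or_ne (mu p b j) (mu p b j') with heq | hneq
    · rw [heq] at hne; exact absurd rfl hne
    · show Disjoint (id (fib p n b (mu p b j))) (id (fib p n b (mu p b j')))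
      simp only [id]
      rw [Finset.disjoint_left]
      intro l hl hl'
      exact hneq ((mem_fib.1 hl).2 ▸ (mem_fib.1 hl').2 ▸ rfl)
  sup_parts := by
    apply le_antisymm
    · apply Finset.sup_le
      intro B hB
      simp only [decParts, Finset.mem_image] at hB
      obtain ⟨j, hj, rfl⟩ := hB
      intro l hl
      exact Finset.mem_of_mem_filter l hl
    · intro l hl
      rw [Finset.mem_Icc] at hl
      have hmem : l ∈ fib p n b (mu p b l) := self_mem_fib_mu hl.1 hl.2
      have hparts : fib p n b (mu p b l) ∈ decParts p n b :=
        Finset.mem_image.2 ⟨l, Finset.mem_Icc.2 hl, rfl⟩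
      exact (Finset.mem_sup.2 ⟨_, hparts, hmem⟩)
  bot_notMem := by
    intro hbot
    simp only [decParts, Finset.bot_eq_empty, Finset.mem_image] at hbot
    obtain ⟨j, hj, hfib⟩ := hbot
    rw [Finset.mem_Icc] at hj
    have := self_mem_fib_mu (b := b) hj.1 hj.2
    rw [hfib] at this
    exact absurd this (Finset.notMem_empty j)

lemma mem_decParts {B : Finset ℕ} :
    B ∈ (decP p n b).parts ↔ ∃ j, (1 ≤ j ∧ j ≤ p*n) ∧ B = fib p n b (mu p b j) := by
  show B ∈ decParts p n b ↔ _
  rw [decParts, Finset.mem_image]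
  constructor
  · rintro ⟨j, hj, rfl⟩
    exact ⟨j, Finset.mem_Icc.1 hj, rfl⟩
  · rintro ⟨j, hj, rfl⟩
    exact ⟨j, Finset.mem_Icc.2 hj, rfl⟩

lemma decP_noncrossing (hOK : SeqOK p n b) : IsNoncrossing (decP p n b) := by
  intro x y z w hxy hyz hzw B₁ hB₁ B₂ hB₂ hx hz hy hw
  obtain ⟨j₁, hj₁, rfl⟩ := mem_decParts.1 hB₁
  obtain ⟨j₂, hj₂, rfl⟩ := mem_decParts.1 hB₂
  obtain ⟨⟨hx1, hxN⟩, hmux⟩ := mem_fib.1 hx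
  obtain ⟨⟨hz1, hzN⟩, hmuz⟩ := mem_fib.1 hz
  obtain ⟨⟨hy1, hyN⟩, hmuy⟩ := mem_fib.1 hy
  obtain ⟨⟨hw1, hwN⟩, hmuw⟩ := mem_fib.1 hw
  -- m₁ := mu j₁ = mu x = mu z ; m₂ := mu j₂ = mu y = mu w
  have h1 : mu p b j₁ ≤ mu p b j₂ := by
    have hm₁ : mu p b j₁ ≤ x := hmux ▸ mu_le hOK hx1 hxN
    have := mu_nesting hOK (j := z) (l := y) hz1 hzN (by omega) (by omega)
    rw [hmuz, hmuy] at this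
    exact this
  have h2 : mu p b j₂ ≤ mu p b j₁ := by
    have hm₂ : mu p b j₂ ≤ y := hmuy ▸ mu_le hOK hy1 hyN
    have := mu_nesting hOK (j := w) (l := z) hw1 hwN (by omega) (by omega)
    rw [hmuw, hmuz] at this
    exact this
  have : mu p b j₁ = mu p b j₂ := le_antisymm h1 h2
  rw [this]

lemma decP_part (hl1 : 1 ≤ l) (hlN : l ≤ p*n) :
    (decP p n b).part l = fib p n b (mu p b l) :=
  (decP p n b).part_eq_of_mem (mem_decParts.2 ⟨l, ⟨hl1, hlN⟩, rfl⟩) (self_mem_fib_mu hl1 hlN)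

lemma decP_dvd (hp : 0 < p) (hOK : SeqOK p n b) :
    ∀ B ∈ (decP p n b).parts, p ∣ B.card := by
  intro B hB
  obtain ⟨j, ⟨hj1, hjN⟩, rfl⟩ := mem_decParts.1 hB
  have hm1 := mu_ge_one hOK hj1 hjN
  have hmN : mu p b j ≤ p*n := le_trans (mu_le hOK hj1 hjN) hjN
  have hbm := b_mu_ne_zero hOK hj1 hjN
  rw [card_fib hp hOK hm1 hmN hbm]
  exact Dvd.intro _ rfl

lemma fib_minOf (hp : 0 < p) (hOK : SeqOK p n b) {j : ℕ} (hj1 : 1 ≤ j) (hjN : j ≤ p*n) :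
    minOf (fib p n b (mu p b j)) = mu p b j := by
  have hm1 := mu_ge_one hOK hj1 hjN
  have hmN : mu p b j ≤ p*n := le_trans (mu_le hOK hj1 hjN) hjN
  have hbm := b_mu_ne_zero hOK hj1 hjN
  apply minOf_eq
  · exact mem_fib.2 ⟨⟨hm1, hmN⟩, mu_self hp hOK hm1 hmN hbm⟩
  · intro x hx
    obtain ⟨⟨hx1, hxN⟩, hmux⟩ := mem_fib.1 hx
    exact hmux ▸ mu_le hOK hx1 hxN

end WithSeq3

section Encode
variable {p n : ℕ}

/-- the encoding of a partition as a sequence of (scaled) block sizes at block minima. -/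
def encB (p n : ℕ) (P : Finpartition (Finset.Icc 1 (p*n))) : ℕ → ℕ :=
  fun i => if i ∈ Finset.Icc 1 (p*n) then
    (if minOf (P.part i) = i then (P.part i).card / p else 0) else 0

variable {P : Finpartition (Finset.Icc 1 (p*n))}

lemma minOf_part_mem {i : ℕ} (hi : i ∈ Finset.Icc 1 (p*n)) : minOf (P.part i) ∈ P.part i :=
  minOf_mem ⟨i, P.mem_part hi⟩

lemma part_subset {i : ℕ} (hi : i ∈ Finset.Icc 1 (p*n)) : P.part i ⊆ Finset.Icc 1 (p*n) :=
  P.le ((P.part_mem.2 hi))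

lemma enc_sum_interval (hp : 0 < p) (hdvd : ∀ B ∈ P.parts, p ∣ B.card) (i j : ℕ) :
    ∑ l ∈ Finset.Icc i j, (p * encB p n P l)
      = ∑ B ∈ P.parts.filter (fun B => minOf B ∈ Finset.Icc i j), B.card := by
  have hstep : ∀ l ∈ Finset.Icc i j, p * encB p n P l
      = if l ∈ Finset.Icc 1 (p*n) ∧ minOf (P.part l) = l then (P.part l).card else 0 := by
    intro l _
    unfold encB
    by_cases h1 : l ∈ Finset.Icc 1 (p*n)
    · by_cases h2 : minOf (P.part l) = l
      · rw [if_pos h1, if_pos h2, if_pos ⟨h1, h2⟩]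
        exact Nat.mul_div_cancel' (hdvd _ ((P.part_mem.2 h1)))
      · rw [if_pos h1, if_neg h2, if_neg (by tauto), Nat.mul_zero]
    · rw [if_neg h1, if_neg (by tauto), Nat.mul_zero]
  rw [Finset.sum_congr rfl hstep, ← Finset.sum_filter]
  apply Finset.sum_bij (fun l _ => P.part l)
  · -- membership
    intro l hl
    obtain ⟨hlIcc, hl1N, hmin⟩ := Finset.mem_filter.1 hl
    refine Finset.mem_filter.2 ⟨(P.part_mem.2 hl1N), ?_⟩
    rw [hmin]
    exact hlIcc
  · -- injectivity
    intro l hl l' hl' heq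
    obtain ⟨_, _, hmin⟩ := Finset.mem_filter.1 hl
    obtain ⟨_, _, hmin'⟩ := Finset.mem_filter.1 hl'
    rw [← hmin, ← hmin', heq]
  · -- surjectivity
    intro B hB
    obtain ⟨hBparts, hBmin⟩ := Finset.mem_filter.1 hB
    have hBne : B.Nonempty := P.nonempty_of_mem_parts hBparts
    have hmem : minOf B ∈ B := minOf_mem hBne
    have hmem1N : minOf B ∈ Finset.Icc 1 (p*n) := P.le hBparts hmem
    have hpart : P.part (minOf B) = B := P.part_eq_of_mem hBparts hmem
    refine ⟨minOf B, Finset.mem_filter.2 ⟨hBmin, hmem1N, by rw [hpart]⟩, hpart⟩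
  · intro l hl
    rfl

lemma parts_disj_on (S : Finset (Finset ℕ)) (hS : S ⊆ P.parts) :
    (S : Set (Finset ℕ)).PairwiseDisjoint id :=
  P.disjoint.subset (by exact_mod_cast hS)

lemma sum_card_eq_card_biUnion (S : Finset (Finset ℕ)) (hS : S ⊆ P.parts) :
    ∑ B ∈ S, B.card = (S.biUnion id).card := by
  rw [Finset.card_biUnion (fun B hB B' hB' hne => P.disjoint (hS hB) (hS hB') hne)]
  rfl

lemma enc_SeqOK (hp : 0 < p) (hdvd : ∀ B ∈ P.parts, p ∣ B.card) :
    SeqOK p n (encB p n P) := by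
  refine ⟨?_, ?_, ?_⟩
  · intro i hi
    unfold encB at hi
    by_cases h1 : i ∈ Finset.Icc 1 (p*n)
    · exact Finset.mem_Icc.1 h1
    · rw [if_neg h1] at hi; exact absurd rfl hi
  · -- sum
    have h := enc_sum_interval (P := P) hp hdvd 1 (p*n)
    have hfilter : P.parts.filter (fun B => minOf B ∈ Finset.Icc 1 (p*n)) = P.parts := by
      apply Finset.filter_true_of_mem
      intro B hB
      exact P.le hB (minOf_mem (P.nonempty_of_mem_parts hB))
    rw [hfilter, P.sum_card_parts, Nat.card_Icc, ← Finset.mul_sum] at h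
    have : p * n + 1 - 1 = p * n := by omega
    rw [this] at h
    exact Nat.eq_of_mul_eq_mul_left hp h
  · -- admissibility
    intro j hj1 hjN
    have h := enc_sum_interval (P := P) hp hdvd 1 j
    rw [← Finset.mul_sum] at h
    rw [h]
    set S := P.parts.filter (fun B => minOf B ∈ Finset.Icc 1 j) with hS
    have hsub : S ⊆ P.parts := Finset.filter_subset _ _
    rw [sum_card_eq_card_biUnion S hsub]
    have hcover : Finset.Icc 1 j ⊆ S.biUnion id := by
      intro l hl
      rw [Finset.mem_Icc] at hl
      have hl1N : l ∈ Finset.Icc 1 (p*n) := Finset.mem_Icc.2 ⟨hl.1, le_trans hl.2 hjN⟩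
      have hmin_le : minOf (P.part l) ≤ l := minOf_le (P.mem_part hl1N)
      have hmin_ge : 1 ≤ minOf (P.part l) :=
        (Finset.mem_Icc.1 (part_subset hl1N (minOf_part_mem hl1N))).1
      refine Finset.mem_biUnion.2 ⟨P.part l, ?_, P.mem_part hl1N⟩
      exact Finset.mem_filter.2 ⟨(P.part_mem.2 hl1N), Finset.mem_Icc.2 ⟨hmin_ge, by omega⟩⟩
    calc j = (Finset.Icc 1 j).card := by rw [Nat.card_Icc]; omega
    _ ≤ (S.biUnion id).card := Finset.card_le_card hcover
end Encode

section Roundtrip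
variable {p n : ℕ} {P : Finpartition (Finset.Icc 1 (p*n))}

lemma mu_enc (hp : 0 < p) (hNC : IsNoncrossing P) (hdvd : ∀ B ∈ P.parts, p ∣ B.card)
    {j : ℕ} (hj1 : 1 ≤ j) (hjN : j ≤ p*n) :
    mu p (encB p n P) j = minOf (P.part j) := by
  have hOK := enc_SeqOK (P := P) hp hdvd
  have hjIcc : j ∈ Finset.Icc 1 (p*n) := Finset.mem_Icc.2 ⟨hj1, hjN⟩
  set m := minOf (P.part j) with hm
  have hmPart : m ∈ P.part j := minOf_part_mem hjIcc
  have hmIcc : m ∈ Finset.Icc 1 (p*n) := part_subset hjIcc hmPart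
  have hm1 : 1 ≤ m := (Finset.mem_Icc.1 hmIcc).1
  have hmj : m ≤ j := minOf_le (P.mem_part hjIcc)
  have hpartm : P.part m = P.part j := P.part_eq_of_mem ((P.part_mem.2 hjIcc)) hmPart
  -- the EE formula
  have hEE : ∀ i : ℕ, EE p (encB p n P) i j
      = ((∑ B ∈ P.parts.filter (fun B => minOf B ∈ Finset.Icc i j), B.card : ℕ) : ℤ)
        - ((j:ℤ) + 1 - (i:ℤ)) := by
    intro i
    unfold EE
    rw [← enc_sum_interval (P := P) hp hdvd i j]
    push_cast
    ring_nf
  -- claim 1 : 0 ≤ EE m j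
  have hclaim1 : 0 ≤ EE p (encB p n P) m j := by
    rw [hEE]
    set S := P.parts.filter (fun B => minOf B ∈ Finset.Icc m j) with hSdef
    have hsub : S ⊆ P.parts := Finset.filter_subset _ _
    have hcover : Finset.Icc m j ⊆ S.biUnion id := by
      intro l hl
      rw [Finset.mem_Icc] at hl
      have hl1N : l ∈ Finset.Icc 1 (p*n) := Finset.mem_Icc.2 ⟨by omega, by omega⟩
      refine Finset.mem_biUnion.2 ⟨P.part l, ?_, P.mem_part hl1N⟩
      refine Finset.mem_filter.2 ⟨(P.part_mem.2 hl1N), Finset.mem_Icc.2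
        ⟨?_, le_trans (minOf_le (P.mem_part hl1N)) hl.2⟩⟩
      -- minOf (P.part l) ≥ m
      by_contra hcon
      push_neg at hcon
      rcases eq_or_ne (P.part l) (P.part j) with heq | hne
      · rw [heq] at hcon; omega
      · have hml : m < l := by
          rcases eq_or_lt_of_le hl.1 with heq2 | hlt2
          · exfalso
            apply hne
            exact P.eq_of_mem_parts ((P.part_mem.2 hl1N)) ((P.part_mem.2 hjIcc))
              (show m ∈ P.part l by rw [heq2]; exact P.mem_part hl1N) hmPart
          · exact hlt2
        have hlj : l < j := by
          rcases eq_or_lt_of_le hl.2 with heq2 | hlt2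
          · exfalso; apply hne; rw [heq2]
          · exact hlt2
        exact hne (hNC (minOf (P.part l)) m l j hcon hml hlj
          (P.part l) ((P.part_mem.2 hl1N)) (P.part j) ((P.part_mem.2 hjIcc))
          (minOf_part_mem hl1N) (P.mem_part hl1N) hmPart (P.mem_part hjIcc))
    have hcard : (Finset.Icc m j).card ≤ ∑ B ∈ S, B.card := by
      rw [sum_card_eq_card_biUnion (P := P) S hsub]
      exact Finset.card_le_card hcover
    rw [Nat.card_Icc] at hcard
    have : ((j + 1 - m : ℕ) : ℤ) = (j:ℤ) + 1 - m := by omega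
    have h2 : ((j + 1 - m : ℕ) : ℤ) ≤ ((∑ B ∈ S, B.card : ℕ) : ℤ) := Int.ofNat_le.2 hcard
    omega
  -- claim 2 : EE i j < 0 for m < i ≤ j
  have hclaim2 : ∀ i : ℕ, m < i → i ≤ j → EE p (encB p n P) i j < 0 := by
    intro i hmi hij
    rw [hEE]
    set S := P.parts.filter (fun B => minOf B ∈ Finset.Icc i j) with hSdef
    have hsub : S ⊆ P.parts := Finset.filter_subset _ _
    have hsubset : S.biUnion id ⊆ (Finset.Icc i j).erase j := by
      intro x hx
      obtain ⟨B, hBS, hxB⟩ := Finset.mem_biUnion.1 hx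
      obtain ⟨hBparts, hBmin⟩ := Finset.mem_filter.1 hBS
      rw [Finset.mem_Icc] at hBmin
      have hBne : B ≠ P.part j := by
        intro heq
        rw [heq] at hBmin
        omega
      have hjB : j ∉ B := by
        intro hjB
        exact hBne (P.eq_of_mem_parts hBparts ((P.part_mem.2 hjIcc)) hjB (P.mem_part hjIcc))
      have hxge : i ≤ x := le_trans hBmin.1 (minOf_le hxB)
      have hxle : x ≤ j := by
        by_contra hcon
        push_neg at hcon
        have hminB_lt_j : minOf B < j := by
          rcases eq_or_lt_of_le hBmin.2 with heq | hlt
          · exfalso; apply hjB; rw [← heq]; exact minOf_mem ⟨x, hxB⟩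
          · exact hlt
        exact hBne ((hNC m (minOf B) j x (by omega) hminB_lt_j hcon
          (P.part j) ((P.part_mem.2 hjIcc)) B hBparts
          hmPart (P.mem_part hjIcc) (minOf_mem ⟨x, hxB⟩) hxB).symm)
      have hxne : x ≠ j := fun h => hjB (h ▸ hxB)
      exact Finset.mem_erase.2 ⟨hxne, Finset.mem_Icc.2 ⟨hxge, hxle⟩⟩
    have hcard : ∑ B ∈ S, B.card ≤ j - i := by
      rw [sum_card_eq_card_biUnion (P := P) S hsub]
      calc (S.biUnion id).card ≤ ((Finset.Icc i j).erase j).card := Finset.card_le_card hsubset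
      _ = (Finset.Icc i j).card - 1 := Finset.card_erase_of_mem (Finset.mem_Icc.2 ⟨hij, le_refl _⟩)
      _ = j - i := by rw [Nat.card_Icc]; omega
    have h2 : ((∑ B ∈ S, B.card : ℕ) : ℤ) ≤ ((j - i : ℕ) : ℤ) := Int.ofNat_le.2 hcard
    have : ((j - i : ℕ) : ℤ) = (j:ℤ) - i := by omega
    omega
  -- conclude
  have hmem : m ∈ candSet p (encB p n P) j :=
    Finset.mem_filter.2 ⟨Finset.mem_Icc.2 ⟨hm1, hmj⟩, hclaim1⟩
  have hge : m ≤ mu p (encB p n P) j := by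
    have := Finset.le_max' (candSet p (encB p n P) j) m hmem
    rw [← mu_eq_max' hOK hj1 hjN] at this
    exact this
  rcases eq_or_lt_of_le hge with heq | hlt
  · omega
  · exfalso
    have h1 := EE_mu hOK hj1 hjN
    have h2 := hclaim2 (mu p (encB p n P) j) hlt (mu_le hOK hj1 hjN)
    omega

lemma fib_enc_eq_part (hp : 0 < p) (hNC : IsNoncrossing P) (hdvd : ∀ B ∈ P.parts, p ∣ B.card)
    {j : ℕ} (hj1 : 1 ≤ j) (hjN : j ≤ p*n) :
    fib p n (encB p n P) (mu p (encB p n P) j) = P.part j := by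
  have hjIcc : j ∈ Finset.Icc 1 (p*n) := Finset.mem_Icc.2 ⟨hj1, hjN⟩
  ext l
  rw [mem_fib]
  constructor
  · rintro ⟨⟨hl1, hlN⟩, hmul⟩
    have hlIcc : l ∈ Finset.Icc 1 (p*n) := Finset.mem_Icc.2 ⟨hl1, hlN⟩
    rw [mu_enc hp hNC hdvd hl1 hlN, mu_enc hp hNC hdvd hj1 hjN] at hmul
    -- minOf (part l) = minOf (part j) → part l = part j
    have h1 : minOf (P.part l) ∈ P.part l := minOf_part_mem hlIcc
    have h2 : minOf (P.part j) ∈ P.part j := minOf_part_mem hjIcc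
    rw [hmul] at h1
    have : P.part l = P.part j :=
      P.eq_of_mem_parts ((P.part_mem.2 hlIcc)) ((P.part_mem.2 hjIcc)) h1 h2
    rw [← this]
    exact P.mem_part hlIcc
  · intro hl
    have hlIcc : l ∈ Finset.Icc 1 (p*n) := part_subset hjIcc hl
    rw [Finset.mem_Icc] at hlIcc
    refine ⟨hlIcc, ?_⟩
    rw [mu_enc hp hNC hdvd hlIcc.1 hlIcc.2, mu_enc hp hNC hdvd hj1 hjN]
    congr 1
    exact P.part_eq_of_mem ((P.part_mem.2 hjIcc)) hl

lemma decP_encB (hp : 0 < p) (hNC : IsNoncrossing P) (hdvd : ∀ B ∈ P.parts, p ∣ B.card) :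
    decP p n (encB p n P) = P := by
  ext B
  show B ∈ decParts p n (encB p n P) ↔ B ∈ P.parts
  constructor
  · intro hB
    obtain ⟨j, hj, rfl⟩ := mem_decParts.1 hB
    rw [fib_enc_eq_part hp hNC hdvd hj.1 hj.2]
    exact P.part_mem.2 (Finset.mem_Icc.2 hj)
  · intro hB
    have hBne : B.Nonempty := P.nonempty_of_mem_parts hB
    obtain ⟨x, hx⟩ := hBne
    have hxIcc : x ∈ Finset.Icc 1 (p*n) := P.le hB hx
    rw [Finset.mem_Icc] at hxIcc
    have : B = P.part x := (P.part_eq_of_mem hB hx).symm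
    rw [this, ← fib_enc_eq_part hp hNC hdvd hxIcc.1 hxIcc.2]
    exact mem_decParts.2 ⟨x, hxIcc, rfl⟩

lemma encB_decP (hp : 0 < p) {b : ℕ → ℕ} (hOK : SeqOK p n b) :
    encB p n (decP p n b) = b := by
  funext i
  by_cases hiIcc : i ∈ Finset.Icc 1 (p*n)
  · rw [Finset.mem_Icc] at hiIcc
    have hpart : (decP p n b).part i = fib p n b (mu p b i) := decP_part hiIcc.1 hiIcc.2
    have hminOf : minOf ((decP p n b).part i) = mu p b i := by
      rw [hpart]
      exact fib_minOf hp hOK hiIcc.1 hiIcc.2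
    unfold encB
    rw [if_pos (Finset.mem_Icc.2 hiIcc), hminOf, hpart]
    by_cases hbi : b i = 0
    · rw [if_neg, hbi]
      intro hcon
      have h3 := EE_mu hOK hiIcc.1 hiIcc.2
      rw [hcon, EE_self, hbi] at h3
      simp at h3
    · have hmui : mu p b i = i := mu_self hp hOK hiIcc.1 hiIcc.2 hbi
      rw [if_pos hmui, hmui, card_fib hp hOK hiIcc.1 hiIcc.2 hbi,
        Nat.mul_div_cancel_left _ hp]
  · unfold encB
    rw [if_neg hiIcc]
    rw [Finset.mem_Icc] at hiIcc
    by_contra hcon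
    have := hOK.1 i (fun h => hcon h.symm)
    omega

end Roundtrip

section Glue
variable {p n : ℕ}

/-- partitions are equivalent to admissible sequences -/
noncomputable def equivPartSeq (hp : 0 < p) :
    {P : Finpartition (Finset.Icc 1 (p*n)) // IsNoncrossing P ∧ ∀ B ∈ P.parts, p ∣ B.card}
      ≃ {b : ℕ → ℕ // SeqOK p n b} where
  toFun := fun X => ⟨encB p n X.1, enc_SeqOK hp X.2.2⟩
  invFun := fun Y => ⟨decP p n Y.1, decP_noncrossing Y.2, decP_dvd hp Y.2⟩
  left_inv := fun X => Subtype.ext (decP_encB hp X.2.1 X.2.2)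
  right_inv := fun Y => Subtype.ext (encB_decP hp Y.2)

lemma sum_shift (b : ℕ → ℕ) (j : ℕ) :
    ∑ i ∈ Finset.range j, b (i+1) = ∑ i ∈ Finset.Icc 1 j, b i := by
  rw [← Finset.Ico_add_one_right_eq_Icc, Finset.sum_Ico_eq_sum_range]
  exact Finset.sum_congr (by norm_num) (fun i _ => by rw [Nat.add_comm])

lemma val_natCast_lt {M : ℕ} (i : ℕ) (h : i < M + 1) : ((i : Fin (M+1)) : ℕ) = i := by
  rw [Fin.val_natCast, Nat.mod_eq_of_lt h]

lemma goodF_last_zero (hp : 0 < p) {c : Fin (p*n+1) → ℕ} (hc : c ∈ GoodF p n) :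
    c ((p*n : ℕ) : Fin (p*n+1)) = 0 := by
  obtain ⟨hsum, hgood⟩ := mem_GoodF.1 hc
  rcases Nat.eq_zero_or_pos (p*n) with hN | hN
  · have hn : n = 0 := by
      rcases Nat.eq_zero_or_pos n with h | h
      · exact h
      · exfalso; have := Nat.mul_le_mul hp h; omega
    have hsum0 : ∑ i : Fin (p*n+1), c i = 0 := by rw [hsum, hn]
    exact (Finset.sum_eq_zero_iff.1 hsum0) ((p*n : ℕ) : Fin (p*n+1)) (Finset.mem_univ _)
  · have h1 : 0 ≤ FF p n c (p*n) := hgood (p*n) hN (le_refl _)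
    have h2 : FF p n c (p*n+1) = -1 := FF_period c hsum
    have h3 : FF p n c (p*n+1) = FF p n c (p*n) + ((p : ℤ) * c ((p*n : ℕ) : Fin (p*n+1)) - 1) := by
      unfold FF
      rw [Finset.sum_range_succ]
      rfl
    have h4 : (p:ℤ) * c ((p*n : ℕ) : Fin (p*n+1)) ≤ 0 := by omega
    by_contra hne
    have h6 : (1:ℤ) ≤ (c ((p*n : ℕ) : Fin (p*n+1)) : ℤ) := by
      exact_mod_cast Nat.one_le_iff_ne_zero.2 hne
    have h7 : (1:ℤ) ≤ (p:ℤ) := by exact_mod_cast hp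
    nlinarith

lemma FF_eval (c : Fin (p*n+1) → ℕ) (j : ℕ) (hj : j ≤ p*n) :
    FF p n c j = (p:ℤ) * (∑ i ∈ Finset.range j, (c ((i:ℕ) : Fin (p*n+1)) : ℤ)) - j := by
  unfold FF term
  rw [Finset.sum_sub_distrib, ← Finset.mul_sum]
  simp only [Finset.sum_const, Finset.card_range, nsmul_eq_mul, mul_one]

/-- admissible sequences are equivalent to good cyclic sequences -/
noncomputable def equivSeqGood (hp : 0 < p) :
    {b : ℕ → ℕ // SeqOK p n b} ≃ {c : Fin (p*n+1) → ℕ // c ∈ GoodF p n} where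
  toFun := fun Y => ⟨fun i => Y.1 (i.1 + 1), by
    obtain ⟨b, hOK⟩ := Y
    have hbN1 : b (p*n+1) = 0 := by
      by_contra h
      have := hOK.1 _ h
      omega
    rw [mem_GoodF]
    constructor
    · have h1 : ∑ i : Fin (p*n+1), b (i.1 + 1) = ∑ i ∈ Finset.range (p*n+1), b (i+1) :=
        Fin.sum_univ_eq_sum_range (fun k => b (k+1)) (p*n+1)
      rw [h1, Finset.sum_range_succ, sum_shift, hOK.2.1, hbN1]
      omega
    · intro j hj hjN
      rw [FF_eval _ j hjN]
      have hcast : ∀ i ∈ Finset.range j, ((fun (i : Fin (p*n+1)) => b (i.1+1)) ((i:ℕ) : Fin (p*n+1)) : ℤ) = (b (i+1) : ℤ) := by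
        intro i hi
        rw [Finset.mem_range] at hi
        show ((b ((((i:ℕ) : Fin (p*n+1)) : ℕ) + 1) : ℕ) : ℤ) = (b (i+1) : ℤ)
        rw [val_natCast_lt i (by omega)]
      rw [Finset.sum_congr rfl hcast]
      have h2 : ∑ i ∈ Finset.range j, (b (i+1) : ℤ) = ((∑ i ∈ Finset.Icc 1 j, b i : ℕ) : ℤ) := by
        rw [← sum_shift b j, Nat.cast_sum]
      rw [h2]
      have h3 := hOK.2.2 j hj hjN
      have h4 : ((p * ∑ i ∈ Finset.Icc 1 j, b i : ℕ) : ℤ) = (p:ℤ) * ((∑ i ∈ Finset.Icc 1 j, b i : ℕ) : ℤ) := by push_cast; ring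
      have h5 := Int.ofNat_le.2 h3
      omega⟩
  invFun := fun Z => ⟨fun l => if 1 ≤ l ∧ l ≤ p*n then Z.1 ((l-1 : ℕ) : Fin (p*n+1)) else 0, by
    obtain ⟨c, hc⟩ := Z
    obtain ⟨hsum, hgood⟩ := mem_GoodF.1 hc
    have hlast := goodF_last_zero hp hc
    refine ⟨?_, ?_, ?_⟩
    · intro i hi
      by_cases h : 1 ≤ i ∧ i ≤ p*n
      · exact h
      · simp only [if_neg h] at hi; exact absurd rfl hi
    · have h1 : ∀ l ∈ Finset.Icc 1 (p*n), (if 1 ≤ l ∧ l ≤ p*n then c ((l-1 : ℕ) : Fin (p*n+1)) else 0) = c ((l-1 : ℕ) : Fin (p*n+1)) := by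
        intro l hl
        rw [Finset.mem_Icc] at hl
        rw [if_pos hl]
      rw [Finset.sum_congr rfl h1]
      have h2 : ∑ l ∈ Finset.Icc 1 (p*n), c ((l-1 : ℕ) : Fin (p*n+1))
          = ∑ i ∈ Finset.range (p*n), c ((i : ℕ) : Fin (p*n+1)) := by
        rw [← sum_shift (fun l => c ((l-1:ℕ) : Fin (p*n+1))) (p*n)]
        exact Finset.sum_congr rfl (fun i _ => by simp only [Nat.add_sub_cancel])
      rw [h2]
      have h3 : ∑ i : Fin (p*n+1), c i = ∑ i ∈ Finset.range (p*n+1), c ((i:ℕ) : Fin (p*n+1)) := by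
        rw [← Fin.sum_univ_eq_sum_range (fun k => c ((k:ℕ) : Fin (p*n+1))) (p*n+1)]
        exact Finset.sum_congr rfl (fun i _ => by rw [Fin.cast_val_eq_self])
      rw [Finset.sum_range_succ] at h3
      rw [h3, hlast] at hsum
      omega
    · intro j hj1 hjN
      have h0 := hgood j hj1 hjN
      rw [FF_eval _ j hjN] at h0
      have h1 : ∀ l ∈ Finset.Icc 1 j, (if 1 ≤ l ∧ l ≤ p*n then c ((l-1 : ℕ) : Fin (p*n+1)) else 0) = c ((l-1 : ℕ) : Fin (p*n+1)) := by
        intro l hl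
        rw [Finset.mem_Icc] at hl
        rw [if_pos ⟨hl.1, le_trans hl.2 hjN⟩]
      rw [Finset.sum_congr rfl h1]
      have h2 : ∑ l ∈ Finset.Icc 1 j, c ((l-1 : ℕ) : Fin (p*n+1))
          = ∑ i ∈ Finset.range j, c ((i : ℕ) : Fin (p*n+1)) := by
        rw [← sum_shift (fun l => c ((l-1:ℕ) : Fin (p*n+1))) j]
        exact Finset.sum_congr rfl (fun i _ => by simp only [Nat.add_sub_cancel])
      rw [h2]
      have h4 : ((p * ∑ i ∈ Finset.range j, c ((i:ℕ) : Fin (p*n+1)) : ℕ) : ℤ)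
          = (p:ℤ) * ∑ i ∈ Finset.range j, ((c ((i:ℕ) : Fin (p*n+1)) : ℕ) : ℤ) := by push_cast; ring
      have : (j:ℤ) ≤ ((p * ∑ i ∈ Finset.range j, c ((i:ℕ) : Fin (p*n+1)) : ℕ) : ℤ) := by
        rw [h4]; omega
      exact_mod_cast this⟩
  left_inv := by
    rintro ⟨b, hOK⟩
    apply Subtype.ext
    funext l
    show (if 1 ≤ l ∧ l ≤ p*n then _ else 0) = b l
    by_cases h : 1 ≤ l ∧ l ≤ p*n
    · rw [if_pos h]
      show b ((((l-1 : ℕ) : Fin (p*n+1)) : ℕ) + 1) = b l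
      rw [val_natCast_lt (l-1) (by omega)]
      congr 1
      omega
    · rw [if_neg h]
      by_contra hcon
      have := hOK.1 l (fun hh => hcon hh.symm)
      exact h this
  right_inv := by
    rintro ⟨c, hc⟩
    apply Subtype.ext
    funext i
    show (if 1 ≤ i.1 + 1 ∧ i.1 + 1 ≤ p*n then _ else 0) = c i
    by_cases h : i.1 + 1 ≤ p*n
    · rw [if_pos ⟨by omega, h⟩]
      simp only [Nat.add_sub_cancel]
      rw [Fin.cast_val_eq_self]
    · have hival : i.1 = p*n := by have := i.2; omega
      rw [if_neg (by omega)]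
      have hlast := goodF_last_zero hp hc
      have : i = ((p*n : ℕ) : Fin (p*n+1)) := by
        apply Fin.ext
        rw [val_natCast_lt (p*n) (by omega), hival]
      rw [this, hlast]
end Glue

theorem main_count (p : ℕ) (hp : 0 < p) (n : ℕ) :
    Nat.card {P : Finpartition (Finset.Icc 1 (p * n)) //
        IsNoncrossing P ∧ ∀ B ∈ P.parts, p ∣ B.card} =
      ((p + 1) * n + 1).choose n / ((p + 1) * n + 1) := by
  have hcard : Nat.card {P : Finpartition (Finset.Icc 1 (p * n)) //
      IsNoncrossing P ∧ ∀ B ∈ P.parts, p ∣ B.card} = (GoodF p n).card := by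
    rw [Nat.card_congr ((equivPartSeq hp).trans (equivSeqGood hp))]
    exact Nat.card_eq_finsetCard _
  rw [hcard]
  -- arithmetic
  have hmain := card_eq_mul_goodF p n
  set G := (GoodF p n).card with hG
  have h1 := Nat.add_one_mul_choose_eq ((p+1)*n) n
  have h2 := Nat.choose_succ_right_eq ((p+1)*n+1) n
  have hq : (p+1)*n = p*n + n := by ring
  have h3 : (p+1)*n + 1 - n = p*n + 1 := by omega
  rw [h3] at h2
  -- h1 : ((p+1)*n+1) * choose ((p+1)*n) n = choose ((p+1)*n+1) (n+1) * (n+1)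
  -- h2 : choose ((p+1)*n+1) (n+1) * (n+1) = choose ((p+1)*n+1) n * (p*n+1)
  have h4 : ((p+1)*n+1) * ((p*n+1) * G) = ((p+1)*n+1).choose n * (p*n+1) := by
    rw [← hmain, ← hq]
    calc ((p+1)*n+1) * ((p+1)*n).choose n = ((p+1)*n+1).choose (n+1) * (n+1) := by
          exact_mod_cast h1
    _ = ((p+1)*n+1).choose n * (p*n+1) := h2
  have h5 : ((p+1)*n+1) * G = ((p+1)*n+1).choose n := by
    have hpos : 0 < p*n+1 := by omega
    apply Nat.eq_of_mul_eq_mul_right hpos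
    calc ((p+1)*n+1) * G * (p*n+1) = ((p+1)*n+1) * ((p*n+1) * G) := by ring
    _ = ((p+1)*n+1).choose n * (p*n+1) := h4
  have hpos : 0 < (p+1)*n+1 := by omega
  symm
  apply Nat.div_eq_of_eq_mul_left hpos
  rw [← h5]
  ring

end FCaux

/-- For every positive integer `p` and every natural number `n`, the number of noncrossing
partitions of `{1,…,pn}` all of whose block cardinalities are multiples of `p` equals the
Fuss–Catalan number `A_n^{p+1} = (1/((p+1)n+1))·C((p+1)n+1, n)`. -/
theorem fussCatalan_counts_planar_partitions_with_block_sizes_multiple (p : ℕ) (hp : 0 < p)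
    (n : ℕ) :
    Nat.card {P : Finpartition (Finset.Icc 1 (p * n)) //
        IsNoncrossing P ∧ ∀ B ∈ P.parts, p ∣ B.card} =
      ((p + 1) * n + 1).choose n / ((p + 1) * n + 1) := by
  exact FCaux.main_count p hp n
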